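/- Let J be an invertible Hermitian N×N complex matrix with exactly κ negative eigenvalues, and let A be a J-selfadjoint N×N matrix (J·A = Aᴴ·J) such that no point of the closed real interval [a, b] (a < b) belongs to the spectrum of A. Then the Hermitian matrix H := (A - b)ᴴ J (A - a) has exactly κ negative eigenvalues and N - κ positive eigenvalues (counted with multiplicity). -/

import Mathlib

open Matrix Finset

namespace Stmt7Aux

variable {N : ℕ}

/-- number of negative eigenvalues -/
noncomputable def negC (M : Matrix (Fin N) (Fin N) ℂ) : ℕ :=
  if h : M.IsHermitian then (Finset.univ.filter fun i => h.eigenvalues i < 0).card else 0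

noncomputable def posC (M : Matrix (Fin N) (Fin N) ℂ) : ℕ :=
  if h : M.IsHermitian then (Finset.univ.filter fun i => 0 < h.eigenvalues i).card else 0

/-- the (real part of the) quadratic form -/
noncomputable def q (M : Matrix (Fin N) (Fin N) ℂ) (x : Fin N → ℂ) : ℝ := (star x ⬝ᵥ M *ᵥ x).re

noncomputable def n2 (x : Fin N → ℂ) : ℝ := ∑ i, Complex.normSq (x i)

noncomputable def S (M : Matrix (Fin N) (Fin N) ℂ) : ℝ := ∑ i, ∑ j, ‖M i j‖

lemma n2_nonneg (x : Fin N → ℂ) : 0 ≤ n2 x :=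
  Finset.sum_nonneg fun i _ => Complex.normSq_nonneg _

lemma n2_pos {x : Fin N → ℂ} (hx : x ≠ 0) : 0 < n2 x := by
  rcases Function.ne_iff.mp hx with ⟨i, hi⟩
  have : 0 < Complex.normSq (x i) := Complex.normSq_pos.mpr hi
  refine lt_of_lt_of_le this ?_
  exact Finset.single_le_sum (fun j _ => Complex.normSq_nonneg _) (Finset.mem_univ i)

lemma S_nonneg (M : Matrix (Fin N) (Fin N) ℂ) : 0 ≤ S M :=
  Finset.sum_nonneg fun i _ => Finset.sum_nonneg fun j _ => norm_nonneg _

lemma S_smul (z : ℂ) (M : Matrix (Fin N) (Fin N) ℂ) : S (z • M) = ‖z‖ * S M := by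
  simp [S, Finset.mul_sum, _root_.map_mul]

lemma normSq_le_n2 (x : Fin N → ℂ) (i : Fin N) : Complex.normSq (x i) ≤ n2 x :=
  Finset.single_le_sum (fun j _ => Complex.normSq_nonneg _) (Finset.mem_univ i)

lemma abs_q_le (M : Matrix (Fin N) (Fin N) ℂ) (x : Fin N → ℂ) : |q M x| ≤ S M * n2 x := by
  have h1 : |q M x| ≤ ‖star x ⬝ᵥ M *ᵥ x‖ := Complex.abs_re_le_norm _
  refine h1.trans ?_
  have h2 : ‖star x ⬝ᵥ M *ᵥ x‖ ≤ ∑ i, ∑ j, ‖M i j‖ * n2 x := by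
    rw [dotProduct]
    refine (norm_sum_le _ _).trans ?_
    refine Finset.sum_le_sum fun i _ => ?_
    rw [mulVec, dotProduct, Finset.mul_sum]
    refine (norm_sum_le _ _).trans ?_
    refine Finset.sum_le_sum fun j _ => ?_
    rw [norm_mul, norm_mul]
    have hx : ‖star x i‖ * ‖x j‖ ≤ n2 x := by
      have hsq : ‖star x i‖ = ‖x i‖ := by
        simp [Pi.star_apply]
      rw [hsq]
      have h_i := Complex.sq_norm (x i) ▸ normSq_le_n2 x i
      have h_j := Complex.sq_norm (x j) ▸ normSq_le_n2 x j
      nlinarith [norm_nonneg (x i), norm_nonneg (x j), sq_nonneg (‖x i‖ - ‖x j‖)]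
    calc ‖star x i‖ * (‖M i j‖ * ‖x j‖)
        = ‖M i j‖ * (‖star x i‖ * ‖x j‖) := by ring
      _ ≤ ‖M i j‖ * n2 x := by
          exact mul_le_mul_of_nonneg_left hx (norm_nonneg _)
  refine h2.trans ?_
  rw [S, Finset.sum_mul]
  refine le_of_eq (Finset.sum_congr rfl fun i _ => ?_)
  rw [Finset.sum_mul]

lemma q_sub (M M' : Matrix (Fin N) (Fin N) ℂ) (x : Fin N → ℂ) :
    q M' x - q M x = q (M' - M) x := by
  simp [q, sub_mulVec, dotProduct_sub, Complex.sub_re]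



/-- coordinate subspace -/
noncomputable def V {N : ℕ} (T : Finset (Fin N)) : Submodule ℂ (Fin N → ℂ) :=
  Submodule.span ℂ ((fun i => Pi.single i (1:ℂ)) '' ↑T)

lemma finrank_V (T : Finset (Fin N)) : Module.finrank ℂ (V T) = T.card := by
  have hli : LinearIndependent ℂ (fun i : {i // i ∈ T} => (Pi.single (i : Fin N) (1:ℂ) : Fin N → ℂ)) := by
    have hb := (Pi.basisFun ℂ (Fin N)).linearIndependent
    have h2 := hb.comp (fun i : {i // i ∈ T} => (i : Fin N)) Subtype.coe_injective
    have he : (⇑(Pi.basisFun ℂ (Fin N)) ∘ fun i : {i // i ∈ T} => (i : Fin N))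
        = fun i : {i // i ∈ T} => (Pi.single (i : Fin N) (1:ℂ) : Fin N → ℂ) := by
      funext i; simp [Function.comp, Pi.basisFun_apply]
    rwa [he] at h2
  have : (fun i => Pi.single i (1:ℂ)) '' ↑T =
      Set.range (fun i : {i // i ∈ T} => (Pi.single (i : Fin N) (1:ℂ) : Fin N → ℂ)) := by
    ext z
    simp
  rw [V, this, finrank_span_eq_card hli]
  simp

lemma mem_V_iff (T : Finset (Fin N)) (x : Fin N → ℂ) :
    x ∈ V T ↔ ∀ j ∉ T, x j = 0 := by
  constructor
  · intro hx j hj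
    induction hx using Submodule.span_induction with
    | mem y hy =>
      obtain ⟨i, hi, rfl⟩ := hy
      exact Pi.single_eq_of_ne (fun h : j = i => hj (by rw [h]; exact hi)) 1
    | zero => rfl
    | add y z _ _ hy hz => simp [hy, hz]
    | smul c y _ hy => simp [hy]
  · intro hx
    have : x = ∑ i ∈ T, x i • (Pi.single i 1 : Fin N → ℂ) := by
      funext j
      rw [Finset.sum_apply]
      by_cases hj : j ∈ T
      · rw [Finset.sum_eq_single j]
        · simp
        · intro i hi hij
          simp [Pi.single_eq_of_ne (Ne.symm hij)]
        · intro h; exact absurd hj h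
      · rw [hx j hj]
        refine (Finset.sum_eq_zero fun i hi => ?_).symm
        have : i ≠ j := fun h => hj (h ▸ hi)
        simp [Pi.single_eq_of_ne this.symm]
    rw [this]
    exact Submodule.sum_smul_mem _ _ fun i hi =>
      Submodule.subset_span ⟨i, hi, rfl⟩

/-- linear equivalence from an invertible matrix pair -/
noncomputable def matEquiv (P Q : Matrix (Fin N) (Fin N) ℂ) (h1 : P * Q = 1) (h2 : Q * P = 1) :
    (Fin N → ℂ) ≃ₗ[ℂ] (Fin N → ℂ) :=
  LinearEquiv.ofLinear (mulVecLin P) (mulVecLin Q)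
    (by rw [← mulVecLin_mul, h1, mulVecLin_one])
    (by rw [← mulVecLin_mul, h2, mulVecLin_one])

@[simp] lemma matEquiv_apply (P Q : Matrix (Fin N) (Fin N) ℂ) (h1 h2) (x : Fin N → ℂ) :
    matEquiv P Q h1 h2 x = P *ᵥ x := rfl

section spectral
variable {M : Matrix (Fin N) (Fin N) ℂ} (hM : M.IsHermitian)

noncomputable abbrev Umat (hM : M.IsHermitian) : Matrix (Fin N) (Fin N) ℂ := hM.eigenvectorUnitary

lemma U_mul_star : Umat hM * star (Umat hM) = 1 := mem_unitaryGroup_iff.mp hM.eigenvectorUnitary.2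
lemma star_mul_U : star (Umat hM) * Umat hM = 1 := mem_unitaryGroup_iff'.mp hM.eigenvectorUnitary.2

/-- image of coordinate subspace under the eigenvector unitary -/
noncomputable def W (hM : M.IsHermitian) (T : Finset (Fin N)) : Submodule ℂ (Fin N → ℂ) :=
  Submodule.map (matEquiv (Umat hM) (star (Umat hM)) (U_mul_star hM) (star_mul_U hM) :
    (Fin N → ℂ) ≃ₗ[ℂ] (Fin N → ℂ)).toLinearMap (V T)

lemma finrank_W (T : Finset (Fin N)) : Module.finrank ℂ (W hM T) = T.card := by
  rw [W, LinearEquiv.finrank_map_eq, finrank_V]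

lemma mem_W_iff (T : Finset (Fin N)) (x : Fin N → ℂ) :
    x ∈ W hM T ↔ ∃ y, (∀ j ∉ T, y j = 0) ∧ x = Umat hM *ᵥ y := by
  rw [W, Submodule.mem_map]
  constructor
  · rintro ⟨y, hy, rfl⟩
    exact ⟨y, (mem_V_iff T y).mp hy, rfl⟩
  · rintro ⟨y, hy, rfl⟩
    exact ⟨y, (mem_V_iff T y).mpr hy, rfl⟩

lemma q_U_mulVec (y : Fin N → ℂ) :
    q M (Umat hM *ᵥ y) = ∑ i, hM.eigenvalues i * Complex.normSq (y i) := by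
  have key : star (Umat hM *ᵥ y) ⬝ᵥ M *ᵥ (Umat hM *ᵥ y)
      = star y ⬝ᵥ (diagonal (RCLike.ofReal ∘ hM.eigenvalues) *ᵥ y) := by
    rw [star_mulVec, mulVec_mulVec, ← dotProduct_mulVec, mulVec_mulVec, ← mul_assoc,
      ← star_eq_conjTranspose, (Unitary.conjStarAlgAut_star_apply (S := ℂ) hM.eigenvectorUnitary M).symm.trans
        hM.conjStarAlgAut_star_eigenvectorUnitary]
  rw [q, key]
  rw [dotProduct]
  rw [Complex.re_sum]
  refine Finset.sum_congr rfl fun i _ => ?_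
  have : (diagonal (RCLike.ofReal ∘ hM.eigenvalues) *ᵥ y) i
      = (hM.eigenvalues i : ℂ) * y i := by
    simp [mulVec, diagonal, dotProduct]
  rw [this]
  simp [Complex.mul_re, Complex.mul_im, Complex.normSq_apply]
  ring

lemma n2_U_mulVec (y : Fin N → ℂ) : n2 (Umat hM *ᵥ y) = n2 y := by
  have key : star (Umat hM *ᵥ y) ⬝ᵥ (Umat hM *ᵥ y) = star y ⬝ᵥ y := by
    rw [star_mulVec, ← dotProduct_mulVec, mulVec_mulVec, ← star_eq_conjTranspose,
      star_mul_U, one_mulVec]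
  have h2 : ∀ z : Fin N → ℂ, n2 z = (star z ⬝ᵥ z).re := by
    intro z
    rw [n2, dotProduct, Complex.re_sum]
    refine Finset.sum_congr rfl fun i _ => ?_
    simp [Complex.normSq_apply, Complex.mul_re]
  rw [h2, h2, key]
end spectral

section counting
variable {N : ℕ} {M : Matrix (Fin N) (Fin N) ℂ}

lemma eig_ne_zero (hM : M.IsHermitian) (hdet : IsUnit M.det) (i : Fin N) :
    hM.eigenvalues i ≠ 0 := by
  intro h0
  have hd := hM.det_eq_prod_eigenvalues
  rw [Finset.prod_eq_zero (Finset.mem_univ i) (by rw [h0]; simp)] at hd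
  rw [hd] at hdet
  simpa using hdet

lemma negC_eq (hM : M.IsHermitian) :
    negC M = (Finset.univ.filter fun i => hM.eigenvalues i < 0).card := by
  rw [negC, dif_pos hM]

lemma posC_eq (hM : M.IsHermitian) :
    posC M = (Finset.univ.filter fun i => 0 < hM.eigenvalues i).card := by
  rw [posC, dif_pos hM]

lemma negC_add_posC (hM : M.IsHermitian) (hdet : IsUnit M.det) :
    negC M + posC M = N := by
  rw [negC_eq hM, posC_eq hM]
  have := Finset.card_filter_add_card_filter_not
    (s := (Finset.univ : Finset (Fin N))) (p := fun i => hM.eigenvalues i < 0)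
  rw [Finset.card_univ, Fintype.card_fin] at this
  have e2 : (Finset.univ.filter fun i => ¬ hM.eigenvalues i < 0)
      = (Finset.univ.filter fun i => 0 < hM.eigenvalues i) := by
    refine Finset.filter_congr fun i _ => ?_
    simp only [not_lt, eq_iff_iff]
    constructor
    · intro h; exact lt_of_le_of_ne h (Ne.symm (eig_ne_zero hM hdet i))
    · exact le_of_lt
  rw [e2] at this
  exact this

lemma exists_neg_subspace (hM : M.IsHermitian) :
    ∃ (Wm : Submodule ℂ (Fin N → ℂ)) (c : ℝ), 0 < c ∧
      Module.finrank ℂ Wm = negC M ∧ ∀ x ∈ Wm, q M x ≤ -c * n2 x := by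
  classical
  set T : Finset (Fin N) := Finset.univ.filter fun i => hM.eigenvalues i < 0 with hT
  refine ⟨W hM T, if h : T.Nonempty then T.inf' h (fun i => -hM.eigenvalues i) else 1, ?_, ?_, ?_⟩
  · split_ifs with h
    · rw [Finset.lt_inf'_iff]
      intro i hi
      rw [hT] at hi
      simp only [Finset.mem_filter] at hi
      linarith [hi.2]
    · norm_num
  · rw [finrank_W, negC_eq hM]
  · intro x hx
    obtain ⟨y, hy, rfl⟩ := (mem_W_iff hM T x).mp hx
    rw [q_U_mulVec, n2_U_mulVec]
    have hsum : ∑ i, hM.eigenvalues i * Complex.normSq (y i)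
        = ∑ i ∈ T, hM.eigenvalues i * Complex.normSq (y i) := by
      refine (Finset.sum_subset (Finset.subset_univ T) fun i _ hi => ?_).symm
      rw [hy i hi]
      simp
    have hn2 : n2 y = ∑ i ∈ T, Complex.normSq (y i) := by
      rw [n2]
      refine (Finset.sum_subset (Finset.subset_univ T) fun i _ hi => ?_).symm
      rw [hy i hi]; simp
    rw [hsum, hn2]
    split_ifs with h
    · have hb : ∀ i ∈ T, hM.eigenvalues i * Complex.normSq (y i)
          ≤ -(T.inf' h fun j => -hM.eigenvalues j) * Complex.normSq (y i) := by
        intro i hi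
        refine mul_le_mul_of_nonneg_right ?_ (Complex.normSq_nonneg _)
        have := Finset.inf'_le (fun j => -hM.eigenvalues j) hi
        linarith
      calc ∑ i ∈ T, hM.eigenvalues i * Complex.normSq (y i)
          ≤ ∑ i ∈ T, -(T.inf' h fun j => -hM.eigenvalues j) * Complex.normSq (y i) :=
            Finset.sum_le_sum hb
        _ = -(T.inf' h fun j => -hM.eigenvalues j) * ∑ i ∈ T, Complex.normSq (y i) := by
            rw [← Finset.mul_sum]

    · have : T = ∅ := Finset.not_nonempty_iff_eq_empty.mp h
      simp [this]

lemma exists_pos_subspace (hM : M.IsHermitian) :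
    ∃ (Wp : Submodule ℂ (Fin N → ℂ)) (c : ℝ), 0 < c ∧
      Module.finrank ℂ Wp = posC M ∧ ∀ x ∈ Wp, c * n2 x ≤ q M x := by
  classical
  set T : Finset (Fin N) := Finset.univ.filter fun i => 0 < hM.eigenvalues i with hT
  refine ⟨W hM T, if h : T.Nonempty then T.inf' h (fun i => hM.eigenvalues i) else 1, ?_, ?_, ?_⟩
  · split_ifs with h
    · rw [Finset.lt_inf'_iff]
      intro i hi
      rw [hT] at hi
      simp only [Finset.mem_filter] at hi
      linarith [hi.2]
    · norm_num
  · rw [finrank_W, posC_eq hM]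
  · intro x hx
    obtain ⟨y, hy, rfl⟩ := (mem_W_iff hM T x).mp hx
    rw [q_U_mulVec, n2_U_mulVec]
    have hsum : ∑ i, hM.eigenvalues i * Complex.normSq (y i)
        = ∑ i ∈ T, hM.eigenvalues i * Complex.normSq (y i) := by
      refine (Finset.sum_subset (Finset.subset_univ T) fun i _ hi => ?_).symm
      rw [hy i hi]; simp
    have hn2 : n2 y = ∑ i ∈ T, Complex.normSq (y i) := by
      rw [n2]
      refine (Finset.sum_subset (Finset.subset_univ T) fun i _ hi => ?_).symm
      rw [hy i hi]; simp
    rw [hsum, hn2]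
    split_ifs with h
    · rw [Finset.mul_sum]
      refine Finset.sum_le_sum fun i hi => ?_
      exact mul_le_mul_of_nonneg_right (Finset.inf'_le _ hi) (Complex.normSq_nonneg _)
    · have : T = ∅ := Finset.not_nonempty_iff_eq_empty.mp h
      simp [this]

lemma finrank_le_negC (hM : M.IsHermitian) (hdet : IsUnit M.det)
    (W' : Submodule ℂ (Fin N → ℂ)) (hW' : ∀ x ∈ W', x ≠ 0 → q M x < 0) :
    Module.finrank ℂ W' ≤ negC M := by
  obtain ⟨Wp, c, hc, hrk, hq⟩ := exists_pos_subspace hM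
  have hbot : W' ⊓ Wp = ⊥ := by
    rw [Submodule.eq_bot_iff]
    intro x hx
    by_contra hx0
    have h1 := hW' x hx.1 hx0
    have h2 := hq x hx.2
    have := n2_pos hx0
    nlinarith
  have hfr := Submodule.finrank_sup_add_finrank_inf_eq W' Wp
  rw [hbot, finrank_bot, add_zero] at hfr
  have hle : Module.finrank ℂ ↥(W' ⊔ Wp) ≤ N := by
    have := Submodule.finrank_le (W' ⊔ Wp)
    rwa [Module.finrank_fin_fun] at this
  have hpart := negC_add_posC hM hdet
  omega

lemma finrank_le_posC (hM : M.IsHermitian) (hdet : IsUnit M.det)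
    (W' : Submodule ℂ (Fin N → ℂ)) (hW' : ∀ x ∈ W', x ≠ 0 → 0 < q M x) :
    Module.finrank ℂ W' ≤ posC M := by
  obtain ⟨Wm, c, hc, hrk, hq⟩ := exists_neg_subspace hM
  have hbot : W' ⊓ Wm = ⊥ := by
    rw [Submodule.eq_bot_iff]
    intro x hx
    by_contra hx0
    have h1 := hW' x hx.1 hx0
    have h2 := hq x hx.2
    have := n2_pos hx0
    nlinarith
  have hfr := Submodule.finrank_sup_add_finrank_inf_eq W' Wm
  rw [hbot, finrank_bot, add_zero] at hfr
  have hle : Module.finrank ℂ ↥(W' ⊔ Wm) ≤ N := by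
    have := Submodule.finrank_le (W' ⊔ Wm)
    rwa [Module.finrank_fin_fun] at this
  have hpart := negC_add_posC hM hdet
  omega

end counting

section invariance
variable {N : ℕ} {M : Matrix (Fin N) (Fin N) ℂ}

lemma semicontinuity (hM : M.IsHermitian) (hdet : IsUnit M.det) :
    ∃ ε > (0:ℝ), ∀ M' : Matrix (Fin N) (Fin N) ℂ, M'.IsHermitian → IsUnit M'.det →
      S (M' - M) < ε → negC M' = negC M ∧ posC M' = posC M := by
  obtain ⟨Wm, cm, hcm, hrkm, hqm⟩ := exists_neg_subspace hM
  obtain ⟨Wp, cp, hcp, hrkp, hqp⟩ := exists_pos_subspace hM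
  refine ⟨min cm cp, lt_min hcm hcp, ?_⟩
  intro M' hM' hdet' hS
  have hneg : negC M ≤ negC M' := by
    rw [← hrkm]
    refine finrank_le_negC hM' hdet' Wm fun x hx hx0 => ?_
    have h1 := hqm x hx
    have h2 : |q (M' - M) x| ≤ S (M' - M) * n2 x := abs_q_le _ _
    have h3 := q_sub M M' x
    have hn := n2_pos hx0
    have h4 : S (M' - M) < cm := lt_of_lt_of_le hS (min_le_left _ _)
    have h5 : S (M' - M) * n2 x < cm * n2 x := by
      exact mul_lt_mul_of_pos_right h4 hn
    have := abs_le.mp h2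
    nlinarith
  have hpos : posC M ≤ posC M' := by
    rw [← hrkp]
    refine finrank_le_posC hM' hdet' Wp fun x hx hx0 => ?_
    have h1 := hqp x hx
    have h2 : |q (M' - M) x| ≤ S (M' - M) * n2 x := abs_q_le _ _
    have h3 := q_sub M M' x
    have hn := n2_pos hx0
    have h4 : S (M' - M) < cp := lt_of_lt_of_le hS (min_le_right _ _)
    have h5 : S (M' - M) * n2 x < cp * n2 x := mul_lt_mul_of_pos_right h4 hn
    have := abs_le.mp h2
    nlinarith
  have e1 := negC_add_posC hM hdet
  have e2 := negC_add_posC hM' hdet'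
  omega

lemma path_invariance (X Y : Matrix (Fin N) (Fin N) ℂ)
    (h : ∀ t : ℝ, t ∈ Set.Icc (0:ℝ) 1 →
      (X + (t:ℂ) • Y).IsHermitian ∧ IsUnit (X + (t:ℂ) • Y).det) :
    negC (X + ((0:ℝ):ℂ) • Y) = negC (X + ((1:ℝ):ℂ) • Y) := by
  haveI : PreconnectedSpace (Set.Icc (0:ℝ) 1) :=
    Subtype.preconnectedSpace isPreconnected_Icc
  set g : (Set.Icc (0:ℝ) 1) → ℕ := fun t => negC (X + ((t:ℝ):ℂ) • Y) with hg
  have hlc : IsLocallyConstant g := by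
    rw [IsLocallyConstant.iff_exists_open]
    intro s
    obtain ⟨hherm, hdet⟩ := h s.1 s.2
    obtain ⟨ε, hε, hloc⟩ := semicontinuity hherm hdet
    refine ⟨Subtype.val ⁻¹' Metric.ball (s:ℝ) (ε / (S Y + 1)), ?_, ?_, ?_⟩
    · exact (Metric.isOpen_ball).preimage continuous_subtype_val
    · simp only [Set.mem_preimage, Metric.mem_ball, dist_self]
      have := S_nonneg Y
      positivity
    · intro s' hs'
      simp only [Set.mem_preimage, Metric.mem_ball, Real.dist_eq] at hs'
      obtain ⟨hherm', hdet'⟩ := h s'.1 s'.2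
      have hdiff : (X + ((s':ℝ):ℂ) • Y) - (X + ((s:ℝ):ℂ) • Y)
          = (((s':ℝ) - (s:ℝ) : ℝ) : ℂ) • Y := by
        rw [add_sub_add_left_eq_sub, ← sub_smul]
        norm_cast
      have hSb : S ((X + ((s':ℝ):ℂ) • Y) - (X + ((s:ℝ):ℂ) • Y)) < ε := by
        rw [hdiff, S_smul]
        rw [Complex.norm_real, Real.norm_eq_abs]
        have hSY : (0:ℝ) ≤ S Y := S_nonneg Y
        calc |(s':ℝ) - (s:ℝ)| * S Y ≤ |(s':ℝ) - (s:ℝ)| * (S Y + 1) := by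
              refine mul_le_mul_of_nonneg_left (by linarith) (abs_nonneg _)
          _ < (ε / (S Y + 1)) * (S Y + 1) := by
              refine mul_lt_mul_of_pos_right hs' (by linarith)
          _ = ε := by field_simp
      exact (hloc _ hherm' hdet' hSb).1
  exact hlc.apply_eq_of_preconnectedSpace ⟨0, by norm_num⟩ ⟨1, by norm_num⟩

lemma q_conj (C : Matrix (Fin N) (Fin N) ℂ) (x : Fin N → ℂ) :
    q (Cᴴ * M * C) x = q M (C *ᵥ x) := by
  rw [q, q]
  congr 1
  rw [star_mulVec, mulVec_mulVec, ← dotProduct_mulVec, mulVec_mulVec, ← mul_assoc]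

lemma isHermitian_conj (hM : M.IsHermitian) (C : Matrix (Fin N) (Fin N) ℂ) :
    (Cᴴ * M * C).IsHermitian := by
  rw [Matrix.IsHermitian]
  rw [conjTranspose_mul, conjTranspose_mul, conjTranspose_conjTranspose, hM.eq, mul_assoc]

lemma isUnit_det_conj (hdet : IsUnit M.det) {C : Matrix (Fin N) (Fin N) ℂ}
    (hC : IsUnit C.det) : IsUnit (Cᴴ * M * C).det := by
  rw [det_mul, det_mul, det_conjTranspose]
  exact (hC.star.mul hdet).mul hC

lemma negC_le_conj (hM : M.IsHermitian) (hdet : IsUnit M.det)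
    {C : Matrix (Fin N) (Fin N) ℂ} (hC : IsUnit C.det) :
    negC M ≤ negC (Cᴴ * M * C) := by
  obtain ⟨Wm, cm, hcm, hrkm, hqm⟩ := exists_neg_subspace hM
  have hCinv : C * C⁻¹ = 1 := mul_nonsing_inv C hC
  have hinvC : C⁻¹ * C = 1 := nonsing_inv_mul C hC
  set e : (Fin N → ℂ) ≃ₗ[ℂ] (Fin N → ℂ) := matEquiv C⁻¹ C hinvC hCinv with he
  have : negC M = Module.finrank ℂ (Submodule.map e.toLinearMap Wm) := by
    rw [LinearEquiv.finrank_map_eq, hrkm]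
  rw [this]
  refine finrank_le_negC (isHermitian_conj hM C) (isUnit_det_conj hdet hC) _ ?_
  intro x hx hx0
  obtain ⟨w, hw, hxw⟩ := Submodule.mem_map.mp hx
  have hx' : x = C⁻¹ *ᵥ w := by rw [← hxw]; rfl
  have hw0 : w ≠ 0 := by
    intro h0
    apply hx0
    rw [hx', h0, mulVec_zero]
  rw [q_conj, hx', mulVec_mulVec, hCinv, one_mulVec]
  have := hqm w hw
  have hn := n2_pos hw0
  nlinarith

lemma negC_conj (hM : M.IsHermitian) (hdet : IsUnit M.det)
    {C : Matrix (Fin N) (Fin N) ℂ} (hC : IsUnit C.det) :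
    negC (Cᴴ * M * C) = negC M := by
  refine le_antisymm ?_ (negC_le_conj hM hdet hC)
  have hC' : IsUnit (C⁻¹).det := by
    rw [det_nonsing_inv]
    exact isUnit_ringInverse.mpr hC
  have h2 := negC_le_conj (isHermitian_conj hM C) (isUnit_det_conj hdet hC) hC'
  have hCH : IsUnit (Cᴴ).det := by
    rw [det_conjTranspose]
    exact hC.star
  have e3 : (C⁻¹)ᴴ * (Cᴴ * M * C) * C⁻¹ = M := by
    rw [conjTranspose_nonsing_inv]
    simp only [Matrix.mul_assoc]
    rw [mul_nonsing_inv C hC, mul_one, ← Matrix.mul_assoc, nonsing_inv_mul _ hCH, one_mul]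
  rw [e3] at h2
  exact h2

end invariance

end Stmt7Aux

open Stmt7Aux

theorem stmt7 {N : ℕ} (J A : Matrix (Fin N) (Fin N) ℂ)
    (hJinv : IsUnit J.det) (hJ : J.IsHermitian) (κ : ℕ)
    (hκ : (Finset.univ.filter fun i => hJ.eigenvalues i < 0).card = κ)
    (hA : J * A = Aᴴ * J) (a b : ℝ) (hab : a < b)
    (hspec : ∀ t ∈ Set.Icc a b, (t : ℂ) ∉ spectrum ℂ A) :
    ∃ hH : ((A - (b : ℂ) • 1)ᴴ * J * (A - (a : ℂ) • 1)).IsHermitian,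
      (Finset.univ.filter fun i => hH.eigenvalues i < 0).card = κ ∧
      (Finset.univ.filter fun i => 0 < hH.eigenvalues i).card = N - κ := by
  classical
  -- invertibility of A - t•1 for t ∈ [a,b]
  have hinv : ∀ t : ℝ, t ∈ Set.Icc a b → IsUnit (A - (t:ℂ) • 1).det := by
    intro t ht
    have h1 : IsUnit ((algebraMap ℂ (Matrix (Fin N) (Fin N) ℂ)) (t:ℂ) - A) :=
      spectrum.notMem_iff.mp (hspec t ht)
    rw [Algebra.algebraMap_eq_smul_one] at h1
    have h2 : IsUnit (A - (t:ℂ) • 1) := by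
      have := h1.neg
      rwa [neg_sub] at this
    exact (Matrix.isUnit_iff_isUnit_det _).mp h2
  -- key commutation identity
  have key : ∀ x : ℝ, J * (A - (x:ℂ) • 1) = (A - (x:ℂ) • 1)ᴴ * J := by
    intro x
    rw [Matrix.mul_sub, Matrix.conjTranspose_sub, Matrix.sub_mul, hA]
    congr 1
    rw [Matrix.conjTranspose_smul, Matrix.conjTranspose_one]
    rw [Matrix.mul_smul, Matrix.smul_mul, mul_one, one_mul]
    congr 1
    simp [Complex.conj_ofReal]
  have comm : ∀ x y : ℝ, (A - (x:ℂ) • 1) * (A - (y:ℂ) • 1)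
      = (A - (y:ℂ) • 1) * (A - (x:ℂ) • 1) := by
    intro x y
    simp only [Matrix.mul_sub, Matrix.sub_mul, Matrix.mul_smul, Matrix.smul_mul,
      Matrix.mul_one, Matrix.one_mul, smul_smul, smul_sub]
    rw [mul_comm ((y:ℂ)) ((x:ℂ))]
    abel
  -- Hermitian-ness of the pencil
  have herm : ∀ c : ℝ, ((A - (c:ℂ) • 1)ᴴ * J * (A - (a:ℂ) • 1)).IsHermitian := by
    intro c
    rw [Matrix.IsHermitian, Matrix.conjTranspose_mul, Matrix.conjTranspose_mul,
      Matrix.conjTranspose_conjTranspose, hJ.eq]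
    calc (A - (a:ℂ) • 1)ᴴ * (J * (A - (c:ℂ) • 1))
        = (A - (a:ℂ) • 1)ᴴ * J * (A - (c:ℂ) • 1) := by rw [Matrix.mul_assoc]
      _ = J * (A - (a:ℂ) • 1) * (A - (c:ℂ) • 1) := by rw [key a]
      _ = J * ((A - (a:ℂ) • 1) * (A - (c:ℂ) • 1)) := by rw [Matrix.mul_assoc]
      _ = J * ((A - (c:ℂ) • 1) * (A - (a:ℂ) • 1)) := by rw [comm a c]
      _ = J * (A - (c:ℂ) • 1) * (A - (a:ℂ) • 1) := by rw [Matrix.mul_assoc]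
      _ = (A - (c:ℂ) • 1)ᴴ * J * (A - (a:ℂ) • 1) := by rw [key c]
  have hermdet : ∀ c : ℝ, c ∈ Set.Icc a b →
      IsUnit ((A - (c:ℂ) • 1)ᴴ * J * (A - (a:ℂ) • 1)).det := by
    intro c hc
    rw [Matrix.det_mul, Matrix.det_mul, Matrix.det_conjTranspose]
    have ha : a ∈ Set.Icc a b := Set.left_mem_Icc.mpr (le_of_lt hab)
    exact (((hinv c hc).star.mul hJinv).mul (hinv a ha))
  -- set up the path
  set K : Matrix (Fin N) (Fin N) ℂ := Aᴴ * J * (A - (a:ℂ) • 1) with hK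
  set Z : Matrix (Fin N) (Fin N) ℂ := J * (A - (a:ℂ) • 1) with hZ
  have hG : ∀ c : ℝ, (A - (c:ℂ) • 1)ᴴ * J * (A - (a:ℂ) • 1) = K - (c:ℂ) • Z := by
    intro c
    rw [Matrix.conjTranspose_sub, Matrix.conjTranspose_smul, Matrix.conjTranspose_one]
    rw [Matrix.sub_mul, Matrix.sub_mul]
    rw [hK, hZ]
    congr 1
    rw [Matrix.smul_mul, Matrix.smul_mul, one_mul]
    congr 1
    simp [Complex.conj_ofReal]
  set X : Matrix (Fin N) (Fin N) ℂ := (A - (b:ℂ) • 1)ᴴ * J * (A - (a:ℂ) • 1) with hX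
  set Y : Matrix (Fin N) (Fin N) ℂ := ((b - a : ℝ) : ℂ) • Z with hY
  have hF : ∀ t : ℝ, X + (t:ℂ) • Y = K - (((1-t)*b + t*a : ℝ):ℂ) • Z := by
    intro t
    rw [hX, hG b, hY, smul_smul]
    have harith : ∀ (u v : ℂ), K - u • Z + v • Z = K - (u - v) • Z := by
      intro u v
      rw [sub_smul]
      abel
    rw [harith]
    congr 1
    push_cast
    ring
  have hmem : ∀ t : ℝ, t ∈ Set.Icc (0:ℝ) 1 → ((1-t)*b + t*a : ℝ) ∈ Set.Icc a b := by
    intro t ht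
    obtain ⟨h0, h1⟩ := ht
    constructor
    · nlinarith
    · nlinarith
  have hpath := path_invariance X Y (by
    intro t ht
    rw [hF t]
    rw [← hG]
    exact ⟨herm _, hermdet _ (hmem t ht)⟩)
  -- identify the endpoints
  have h0 : X + ((0:ℝ):ℂ) • Y = X := by
    simp
  have h1 : X + ((1:ℝ):ℂ) • Y = (A - (a:ℂ) • 1)ᴴ * J * (A - (a:ℂ) • 1) := by
    rw [hF 1, hG a]
    norm_num
  rw [h0, h1] at hpath
  -- congruence invariance at the endpoint
  have ha : a ∈ Set.Icc a b := Set.left_mem_Icc.mpr (le_of_lt hab)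
  have hcong := negC_conj hJ hJinv (hinv a ha)
  -- conclude
  have hnegX : negC X = κ := by
    rw [hpath, hcong, negC_eq hJ, hκ]
  have hHerm : X.IsHermitian := herm b
  have hXdet : IsUnit X.det := hermdet b (Set.right_mem_Icc.mpr (le_of_lt hab))
  have hsum := negC_add_posC hHerm hXdet
  refine ⟨hHerm, ?_, ?_⟩
  · rw [← negC_eq hHerm, hnegX]
  · rw [← posC_eq hHerm]
    omega
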